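/- For every t ≥ 2 and every function f: E((3t−2)K₂) → E((3t−2)K₂) with f(e) ≠ e for all e, there exist t edges e₁,…,e_t of (3t−2)K₂ such that f(e_i) ∉ {e₁,…,e_t} for all i. Moreover, there is a function f: E((3t−3)K₂) → E((3t−3)K₂) with f(e) ≠ e for all e, such that no t edges e₁,…,e_t satisfy f(e_i) ∉ {e₁,…,e_t} for all i. -/

import Mathlib

open SimpleGraph

variable {V W : Type*}

/-- Two `Sym2` elements (edges) are vertex-disjoint. -/
def sym2Disjoint (e e' : Sym2 V) : Prop := ∀ v, v ∈ e → v ∉ e'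

/-- Edge set of the copy of `G` in `H` given by an (injective) homomorphism. -/
def copyEdges (G : SimpleGraph V) (H : SimpleGraph W) (φ : G →g H) : Set (Sym2 W) :=
  Sym2.map φ '' G.edgeSet

/-- The edge set `E` is `f`-free. -/
def IsFreeSet (f : Sym2 W → Sym2 W) (E : Set (Sym2 W)) : Prop := ∀ e ∈ E, f e ∉ E

/-- `f` is an edge mapping of `H` with `f e ≠ e` (equivalently `|f e ∩ e| ≤ 1`). -/
def IsEdgeMap (H : SimpleGraph W) (f : Sym2 W → Sym2 W) : Prop :=
  ∀ e ∈ H.edgeSet, f e ∈ H.edgeSet ∧ f e ≠ e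

/-- `f` is an edge mapping of `H` with `f e ∩ e = ∅`. -/
def IsDisjEdgeMap (H : SimpleGraph W) (f : Sym2 W → Sym2 W) : Prop :=
  ∀ e ∈ H.edgeSet, f e ∈ H.edgeSet ∧ sym2Disjoint e (f e)

/-- `H` contains a copy of `G` (as a not necessarily induced subgraph). -/
def Contains (G : SimpleGraph V) (H : SimpleGraph W) : Prop :=
  ∃ φ : G →g H, Function.Injective φ

/-- `H` has no `f`-free copy of `G`. -/
def NoFreeCopy (G : SimpleGraph V) (H : SimpleGraph W) (f : Sym2 W → Sym2 W) : Prop :=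
  ∀ φ : G →g H, Function.Injective φ → ¬ IsFreeSet f (copyEdges G H φ)

/-- The Turán number `ex(n, G)`. -/
noncomputable def exNum (n : ℕ) (G : SimpleGraph V) : ℕ :=
  sSup {m | ∃ H : SimpleGraph (Fin n), H.edgeSet.ncard = m ∧ ¬ Contains G H}

/-- The parameter `h(n, G)`. -/
noncomputable def hNum (n : ℕ) (G : SimpleGraph V) : ℕ :=
  sSup {m | ∃ (H : SimpleGraph (Fin n)) (f : Sym2 (Fin n) → Sym2 (Fin n)),
    H.edgeSet.ncard = m ∧ IsEdgeMap H f ∧ NoFreeCopy G H f}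

/-- Independence number. -/
noncomputable def indepNum (G : SimpleGraph V) [Fintype V] : ℕ :=
  sSup {m | ∃ s : Finset V, (∀ v ∈ s, ∀ w ∈ s, ¬ G.Adj v w) ∧ s.card = m}

/-- The matching `tK₂` on `Fin (2t)`: vertices `2i, 2i+1` are matched. -/
def matching (t : ℕ) : SimpleGraph (Fin (2*t)) :=
  SimpleGraph.fromRel (fun v w => (v : ℕ) / 2 = (w : ℕ) / 2)

/-- The star `K_{1,r}` on `Fin (r+1)`, with center `0`. -/
def starG (r : ℕ) : SimpleGraph (Fin (r+1)) :=
  SimpleGraph.fromRel (fun v _ => v = 0)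


private def iotaE {n : ℕ} : Sym2 (Fin n) → ℕ :=
  Sym2.lift ⟨fun v w => min ((v:ℕ)/2) ((w:ℕ)/2), fun _ _ => min_comm _ _⟩



lemma matching_adj {m : ℕ} (v w : Fin (2*m)) :
    (matching m).Adj v w ↔ v ≠ w ∧ (v:ℕ)/2 = (w:ℕ)/2 := by
  simp only [matching, fromRel_adj]
  constructor
  · rintro ⟨h, h2 | h2⟩ <;> exact ⟨h, by omega⟩
  · rintro ⟨h, h2⟩; exact ⟨h, Or.inl h2⟩

lemma iota_lt {m : ℕ} {e : Sym2 (Fin (2*m))} (he : e ∈ (matching m).edgeSet) : iotaE e < m := by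
  induction e using Sym2.ind with
  | _ v w =>
    rw [SimpleGraph.mem_edgeSet, matching_adj] at he
    have hv := v.isLt
    have hw := w.isLt
    simp only [iotaE, Sym2.lift_mk]
    omega

lemma iota_inj {m : ℕ} {e e' : Sym2 (Fin (2*m))} (he : e ∈ (matching m).edgeSet)
    (he' : e' ∈ (matching m).edgeSet) (h : iotaE e = iotaE e') : e = e' := by
  induction e using Sym2.ind with
  | _ v w =>
  induction e' using Sym2.ind with
  | _ v' w' =>
  rw [SimpleGraph.mem_edgeSet, matching_adj] at he he'
  obtain ⟨hne, hd⟩ := he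
  obtain ⟨hne', hd'⟩ := he'
  have hvw : (v:ℕ) ≠ (w:ℕ) := fun hh => hne (Fin.ext hh)
  have hvw' : (v':ℕ) ≠ (w':ℕ) := fun hh => hne' (Fin.ext hh)
  simp only [iotaE, Sym2.lift_mk] at h
  rw [Sym2.eq_iff]
  have hx : ((v:ℕ) = v' ∧ (w:ℕ) = w') ∨ ((v:ℕ) = w' ∧ (w:ℕ) = v') := by omega
  rcases hx with ⟨h1,h2⟩ | ⟨h1,h2⟩
  · exact Or.inl ⟨Fin.ext h1, Fin.ext h2⟩
  · exact Or.inr ⟨Fin.ext h1, Fin.ext h2⟩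

lemma iota_surj {m i : ℕ} (hi : i < m) :
    ∃ e ∈ (matching m).edgeSet, iotaE e = i := by
  refine ⟨s(⟨2*i, by omega⟩, ⟨2*i+1, by omega⟩), ?_, ?_⟩
  · rw [SimpleGraph.mem_edgeSet, matching_adj]
    refine ⟨?_, by simp; omega⟩
    intro hh
    rw [Fin.ext_iff] at hh
    simp at hh
  · simp [iotaE]; omega


private def gfun : ℕ → ℕ := fun i => 3*(i/3) + (i%3+1)%3


lemma keyIndep {α : Type*} [DecidableEq α] (f : α → α) :
    ∀ (n : ℕ) (S : Finset α), S.card ≤ n → (∀ e ∈ S, f e ≠ e) →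
    ∃ T : Finset α, T ⊆ S ∧ S.card ≤ 3 * T.card ∧ ∀ e ∈ T, f e ∉ T := by
  intro n
  induction n with
  | zero =>
    intro S hS _
    exact ⟨∅, by simp, by omega, by simp⟩
  | succ n IH =>
    intro S hS hf
    rcases S.eq_empty_or_nonempty with rfl | ⟨v0, hv0⟩
    · exact ⟨∅, by simp, by simp, by simp⟩
    have main : ∀ v ∈ S, ∀ R : Finset α, v ∈ R → f v ∈ R → R.card ≤ 3 →
        (∀ e ∈ S \ R, f e ≠ v) →
        ∃ T : Finset α, T ⊆ S ∧ S.card ≤ 3 * T.card ∧ ∀ e ∈ T, f e ∉ T := by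
      intro v hv R hvR hfvR hR3 hnopre
      have hvnot : v ∉ S \ R := by simp [hvR]
      have hsub : S \ R ⊂ S :=
        (Finset.ssubset_iff_of_subset (Finset.sdiff_subset)).mpr ⟨v, hv, hvnot⟩
      have hcard' : (S \ R).card ≤ n := by
        have := Finset.card_lt_card hsub
        omega
      obtain ⟨T', hT'S, hc', hind'⟩ := IH (S \ R) hcard'
        (fun e he => hf e (Finset.mem_sdiff.mp he).1)
      have hvT' : v ∉ T' := fun h => hvnot (hT'S h)
      refine ⟨insert v T', ?_, ?_, ?_⟩
      · exact Finset.insert_subset hv (hT'S.trans Finset.sdiff_subset)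
      · rw [Finset.card_insert_of_notMem hvT']
        have h1 : S.card ≤ (S \ R).card + R.card := Finset.card_le_card_sdiff_add_card
        omega
      · intro e he
        rcases Finset.mem_insert.mp he with rfl | heT'
        · intro hcon
          rcases Finset.mem_insert.mp hcon with h1 | h1
          · exact hf e hv h1
          · exact (Finset.mem_sdiff.mp (hT'S h1)).2 hfvR
        · intro hcon
          rcases Finset.mem_insert.mp hcon with h1 | h1
          · exact hnopre e (hT'S heT') h1
          · exact hind' e heT' h1
    by_cases hA : ∃ v ∈ S, ∀ w ∈ S, f w ≠ v
    · obtain ⟨v, hv, hnopre⟩ := hA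
      refine main v hv {v, f v, f (f v)} (by simp) (by simp) ?_
        (fun e he => hnopre e (Finset.mem_sdiff.mp he).1)
      apply le_trans (Finset.card_insert_le _ _)
      apply Nat.succ_le_succ
      apply le_trans (Finset.card_insert_le _ _)
      simp
    · push_neg at hA
      have himg : S ⊆ S.image f := by
        intro v hv
        obtain ⟨w, hw, hfw⟩ := hA v hv
        exact Finset.mem_image.mpr ⟨w, hw, hfw⟩
      have heq : S.image f = S :=
        (Finset.eq_of_subset_of_card_le himg (Finset.card_image_le)).symm
      have hinj : Set.InjOn f S := by
        apply Finset.injOn_of_card_image_eq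
        rw [heq]
      obtain ⟨w, hw, hfw⟩ := hA v0 hv0
      refine main v0 hv0 {v0, f v0, w} (by simp) (by simp) ?_ ?_
      · apply le_trans (Finset.card_insert_le _ _)
        apply Nat.succ_le_succ
        apply le_trans (Finset.card_insert_le _ _)
        simp
      · intro e he hcon
        obtain ⟨heS, heR⟩ := Finset.mem_sdiff.mp he
        have : e = w := hinj heS hw (by rw [hcon, hfw])
        exact heR (by simp [this])

/-- every edge mapping of (3t-2)K₂ admits an f-free set of t edges,
while (3t-3)K₂ admits an edge mapping with no such set. -/
theorem stmt6 (t : ℕ) (ht : 2 ≤ t) :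
    (∀ f : Sym2 (Fin (2*(3*t-2))) → Sym2 (Fin (2*(3*t-2))),
      IsEdgeMap (matching (3*t-2)) f →
      ∃ s : Finset (Sym2 (Fin (2*(3*t-2)))), s.card = t ∧
        ↑s ⊆ (matching (3*t-2)).edgeSet ∧ ∀ e ∈ s, f e ∉ s) ∧
    (∃ f : Sym2 (Fin (2*(3*t-3))) → Sym2 (Fin (2*(3*t-3))),
      IsEdgeMap (matching (3*t-3)) f ∧
      ∀ s : Finset (Sym2 (Fin (2*(3*t-3)))), s.card = t →
        ↑s ⊆ (matching (3*t-3)).edgeSet → ∃ e ∈ s, f e ∈ s) := by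
  constructor
  · intro f hf
    have hedges : ∀ e ∈ ((matching (3*t-2)).edgeSet.toFinite.toFinset), f e ≠ e := by
      intro e he
      exact (hf e ((Set.Finite.mem_toFinset _).mp he)).2
    set edges := ((matching (3*t-2)).edgeSet.toFinite.toFinset) with hedgesdef
    have hcardE : edges.card = 3*t-2 := by
      have himg : edges.image iotaE = Finset.range (3*t-2) := by
        ext i
        simp only [Finset.mem_image, Finset.mem_range, hedgesdef, Set.Finite.mem_toFinset]
        constructor
        · rintro ⟨e, he, rfl⟩
          exact iota_lt he
        · intro hi
          obtain ⟨e, he, hei⟩ := iota_surj hi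
          exact ⟨e, he, hei⟩
      have hinj : Set.InjOn iotaE (edges : Set (Sym2 (Fin (2*(3*t-2))))) := by
        intro e he e' he' h
        exact iota_inj ((Set.Finite.mem_toFinset _).mp he) ((Set.Finite.mem_toFinset _).mp he') h
      have := Finset.card_image_of_injOn hinj
      rw [himg, Finset.card_range] at this
      omega
    obtain ⟨T, hTsub, hTcard, hTind⟩ := keyIndep f edges.card edges le_rfl hedges
    have hTt : t ≤ T.card := by omega
    obtain ⟨s, hsT, hscard⟩ := Finset.exists_subset_card_eq hTt
    refine ⟨s, hscard, ?_, ?_⟩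
    · intro e he
      have : e ∈ edges := hTsub (hsT (by simpa using he))
      exact (Set.Finite.mem_toFinset _).mp this
    · intro e he hcon
      exact hTind e (hsT he) (hsT hcon)
  · -- part 2
    have hglt : ∀ i, i < 3*t-3 → gfun i < 3*t-3 := by
      intro i hi; simp only [gfun]; omega
    let σ : Fin (2*(3*t-3)) → Fin (2*(3*t-3)) := fun v =>
      ⟨2 * gfun ((v:ℕ)/2) + (v:ℕ)%2, by
        have h1 := v.isLt
        have h2 := hglt ((v:ℕ)/2) (by omega)
        omega⟩
    have hσval : ∀ v : Fin (2*(3*t-3)), ((σ v):ℕ) = 2 * gfun ((v:ℕ)/2) + (v:ℕ)%2 :=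
      fun v => rfl
    have hgne : ∀ i, gfun i ≠ i := by intro i; simp only [gfun]; omega
    -- main per-edge facts
    have hmain : ∀ e ∈ (matching (3*t-3)).edgeSet,
        Sym2.map σ e ∈ (matching (3*t-3)).edgeSet ∧ iotaE (Sym2.map σ e) = gfun (iotaE e) := by
      intro e he
      induction e using Sym2.ind with
      | _ v w =>
        rw [SimpleGraph.mem_edgeSet, matching_adj] at he
        obtain ⟨hne, hd⟩ := he
        have hvw : (v:ℕ) ≠ (w:ℕ) := fun hh => hne (Fin.ext hh)
        rw [Sym2.map_pair_eq]
        have h1 := hσval v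
        have h2 := hσval w
        rw [hd] at h1
        refine ⟨?_, ?_⟩
        · rw [SimpleGraph.mem_edgeSet, matching_adj]
          constructor
          · intro hh
            rw [Fin.ext_iff] at hh
            omega
          · omega
        · simp only [iotaE, Sym2.lift_mk]
          rw [hd, min_self]
          omega
    refine ⟨Sym2.map σ, ?_, ?_⟩
    · intro e he
      obtain ⟨hmem, hio⟩ := hmain e he
      refine ⟨hmem, ?_⟩
      intro hcon
      have := hgne (iotaE e)
      rw [hcon] at hio
      omega
    · intro s hcard hsub
      have hmaps : ∀ e ∈ s, iotaE e / 3 ∈ Finset.range (t-1) := by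
        intro e he
        have := iota_lt (hsub he)
        rw [Finset.mem_range]
        omega
      obtain ⟨e, he, e', he', hne, heq⟩ :=
        Finset.exists_ne_map_eq_of_card_lt_of_maps_to
          (by rw [hcard, Finset.card_range]; omega) hmaps
      have hie : e ∈ (matching (3*t-3)).edgeSet := hsub he
      have hie' : e' ∈ (matching (3*t-3)).edgeSet := hsub he'
      have hij : iotaE e ≠ iotaE e' := fun h => hne (iota_inj hie hie' h)
      have hcase : gfun (iotaE e) = iotaE e' ∨ gfun (iotaE e') = iotaE e := by
        simp only [gfun]
        omega
      rcases hcase with hc | hc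
      · refine ⟨e, he, ?_⟩
        obtain ⟨hmem, hio⟩ := hmain e hie
        have : Sym2.map σ e = e' := iota_inj hmem hie' (by rw [hio, hc])
        rw [this]; exact he'
      · refine ⟨e', he', ?_⟩
        obtain ⟨hmem, hio⟩ := hmain e' hie'
        have : Sym2.map σ e' = e := iota_inj hmem hie (by rw [hio, hc])
        rw [this]; exact he
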